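/- For 0 ≤ k ≤ n-3, any two collections labeled by suffixes of the form s_{n,k+1}s_{n-1,j₂}s_{n,j₃}⋯s_{n-1+[ℓ]₂,j_ℓ} with ℓ ≥ 2 (i.e., first segment descending to k+1 and at least two segments) have exactly the same set of prefixes, and in particular the same number of elements. -/

import Mathlib

/-- Letters `i` and `j` (from `{1, …, n}`) are neighbors in the `Dₙ` Dynkin diagram:
`1 – 2 – ⋯ – (n-2)` is a path, and both `n-1` and `n` are adjacent to `n-2`. -/
def dnAdj (n i j : ℕ) : Prop :=
  (i + 1 = j ∧ j ≤ n - 1) ∨ (j + 1 = i ∧ i ≤ n - 1) ∨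
  (i = n ∧ j = n - 2) ∨ (j = n ∧ i = n - 2)

/-- A word `w` is homogeneous (with respect to a neighbor relation `adj`): whenever the same
letter appears in positions `r < s`, there are positions `t, u` with `r < t < u < s` whose
letters are both neighbors of that letter. -/
def Homog {α : Type*} (adj : α → α → Prop) (w : List α) : Prop :=
  ∀ r s : Fin w.length, (r : ℕ) < s → w.get r = w.get s →
    ∃ t u : Fin w.length, (r : ℕ) < t ∧ (t : ℕ) < u ∧ (u : ℕ) < s ∧
      adj (w.get r) (w.get t) ∧ adj (w.get r) (w.get u)

/-- The descending word `[a, a-1, …, b]` (empty if `a < b`). -/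
def desc (a b : ℕ) : List ℕ := (List.range (a + 1 - b)).map (fun t => a - t)

/-- The suffix word `s_{n,j₁} s_{n-1,j₂} s_{n,j₃} ⋯` of type `Dₙ` determined by the indices
`j₁ < j₂ < ⋯ < j_ℓ`; the boolean records whether the next segment starts with `n` (`true`)
or with `n-1` (`false`). -/
def suffixWord (n : ℕ) : Bool → List ℕ → List ℕ
  | _, [] => []
  | b, j :: js => ((if b then n else n - 1) :: desc (n - 2) j) ++ suffixWord n (!b) js

/-- Validity of the indices `j₁ < j₂ < ⋯ < j_ℓ` of a suffix: strictly increasing and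
contained in `{1, …, n-1}`. -/
def ValidSuffixIdx (n : ℕ) (js : List ℕ) : Prop :=
  js.Chain' (· < ·) ∧ ∀ j ∈ js, 1 ≤ j ∧ j ≤ n - 1

/-- The prefix word `s_{1,i₁} s_{2,i₂} ⋯ s_{n-1,i_{n-1}}` where `s_{k,i} = [k, k-1, …, i]`. -/
def prefixWord (n : ℕ) (i : ℕ → ℕ) : List ℕ :=
  (List.range (n - 1)).flatMap (fun k => desc (k + 1) (i (k + 1)))

/-- Validity of the indices of a prefix: `1 ≤ i_k ≤ k + 1` for `1 ≤ k ≤ n-1`. -/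
def ValidPrefixIdx (n : ℕ) (i : ℕ → ℕ) : Prop :=
  ∀ k, 1 ≤ k → k ≤ n - 1 → 1 ≤ i k ∧ i k ≤ k + 1

/-- The collection labeled by a suffix `suf`: all homogeneous canonical words of type `Dₙ`
with suffix `suf`. -/
def collection (n : ℕ) (suf : List ℕ) : Set (List ℕ) :=
  {w | ∃ i, ValidPrefixIdx n i ∧ w = prefixWord n i ++ suf ∧ Homog (dnAdj n) w}

/-- The set of prefixes appearing in the collection labeled by a suffix `suf`. -/
def prefixSet (n : ℕ) (suf : List ℕ) : Set (List ℕ) :=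
  {p | ∃ i, ValidPrefixIdx n i ∧ p = prefixWord n i ∧ Homog (dnAdj n) (p ++ suf)}

lemma desc_length (a b : ℕ) : (desc a b).length = a + 1 - b := by simp [desc]

lemma desc_getElem (a b t : ℕ) (h : t < (desc a b).length) : (desc a b)[t] = a - t := by
  simp [desc]

lemma mem_desc {a b x : ℕ} (hx : x ∈ desc a b) : b ≤ x ∧ x ≤ a := by
  simp only [desc, List.mem_map, List.mem_range] at hx
  obtain ⟨t, ht, rfl⟩ := hx; omega

lemma desc_nodup (a b : ℕ) : (desc a b).Nodup := by
  refine List.nodup_range.map_on ?_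
  intro t ht u hu h
  simp only [List.mem_range] at ht hu
  omega

lemma suffixWord_cons (n : ℕ) (b : Bool) (j : ℕ) (js : List ℕ) :
    suffixWord n b (j :: js) =
      ((if b then n else n - 1) :: desc (n - 2) j) ++ suffixWord n (!b) js := rfl

lemma seg_length (n j : ℕ) (hn : 4 ≤ n) (hj : j ≤ n - 1) (b : Bool) :
    ((if b then n else n - 1) :: desc (n - 2) j).length = n - j := by
  simp [desc_length]; omega

lemma suffix_le_mem (n m : ℕ) (hm : m ≤ n - 1) (js : List ℕ) (b : Bool)
    (hj : ∀ j ∈ js, m ≤ j) : ∀ x ∈ suffixWord n b js, m ≤ x := by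
  induction js generalizing b with
  | nil => intro x hx; simp [suffixWord] at hx
  | cons j tl ih =>
    intro x hx
    rw [suffixWord_cons] at hx
    rcases List.mem_append.1 hx with hx | hx
    · rcases List.mem_cons.1 hx with rfl | hx
      · cases b <;> simp <;> omega
      · have h1 := mem_desc hx
        have h2 := hj j (by simp)
        omega
    · exact ih (!b) (fun a ha => hj a (List.mem_cons_of_mem _ ha)) x hx

lemma suffixWord_length_cons (n : ℕ) (b : Bool) (j : ℕ) (js : List ℕ)
    (hn : 4 ≤ n) (hj : j ≤ n - 1) :
    (suffixWord n b (j :: js)).length = (n - j) + (suffixWord n (!b) js).length := by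
  rw [suffixWord_cons, List.length_append, seg_length n j hn hj b]

lemma suffixWord_getElem_low (n : ℕ) (b : Bool) (j : ℕ) (js : List ℕ)
    (hn : 4 ≤ n) (hj1 : 1 ≤ j) (hj : j ≤ n - 1) (q : ℕ) (hq : q < n - j)
    (h : q < (suffixWord n b (j :: js)).length) :
    (suffixWord n b (j :: js))[q] =
      if q = 0 then (if b then n else n - 1) else n - 1 - q := by
  have hdl := desc_length (n - 2) j
  have h' : q < ((if b then n else n - 1) :: desc (n - 2) j).length := by
    rw [seg_length n j hn hj b]; omega
  rw [show (suffixWord n b (j :: js))[q] =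
      ((if b then n else n - 1) :: desc (n - 2) j)[q] from
    List.getElem_of_eq (suffixWord_cons n b j js) h ▸ List.getElem_append_left h']
  rcases Nat.eq_zero_or_pos q with rfl | hq0
  · simp
  · obtain ⟨q', rfl⟩ : ∃ q', q = q' + 1 := ⟨q - 1, by omega⟩
    rw [List.getElem_cons_succ, desc_getElem _ _ _ (by omega), if_neg (by omega)]
    omega

lemma suffixWord_getElem_high (n : ℕ) (b : Bool) (j : ℕ) (js : List ℕ)
    (hn : 4 ≤ n) (hj : j ≤ n - 1) (q : ℕ) (hq : n - j ≤ q)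
    (h : q < (suffixWord n b (j :: js)).length)
    (h2 : q - (n - j) < (suffixWord n (!b) js).length) :
    (suffixWord n b (j :: js))[q] = (suffixWord n (!b) js)[q - (n - j)] := by
  have hsl := seg_length n j hn hj b
  rw [show (suffixWord n b (j :: js))[q] =
      (suffixWord n (!b) js)[q - ((if b then n else n - 1) :: desc (n - 2) j).length] from
    List.getElem_of_eq (suffixWord_cons n b j js) h ▸ List.getElem_append_right (by omega)]
  congr 1
  omega

lemma suffixWord_getElem_high' (n : ℕ) (b : Bool) (j : ℕ) (js : List ℕ)
    (hn : 4 ≤ n) (hj : j ≤ n - 1) (q2 : ℕ)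
    (h2 : q2 < (suffixWord n (!b) js).length)
    (h : n - j + q2 < (suffixWord n b (j :: js)).length) :
    (suffixWord n b (j :: js))[n - j + q2] = (suffixWord n (!b) js)[q2] := by
  rw [suffixWord_getElem_high n b j js hn hj (n - j + q2) (by omega) h (by omega)]
  congr 1
  omega

lemma suffix_pred_adj (n : ℕ) (hn : 4 ≤ n) (js : List ℕ) (b : Bool)
    (hbd : ∀ j ∈ js, 1 ≤ j ∧ j ≤ n - 1) :
    ∀ q (h : q + 1 < (suffixWord n b js).length),
      (suffixWord n b js)[q + 1] ≤ n - 2 →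
      dnAdj n ((suffixWord n b js)[q + 1]) ((suffixWord n b js)[q]'(by omega)) := by
  induction js generalizing b with
  | nil => intro q h; simp [suffixWord] at h
  | cons j tl ih =>
    intro q h hle
    have hj := hbd j List.mem_cons_self
    have hL := suffixWord_length_cons n b j tl hn hj.2
    by_cases hq : q + 1 < n - j
    · rw [suffixWord_getElem_low n b j tl hn hj.1 hj.2 (q+1) hq h,
        if_neg (by omega)] at hle ⊢
      rw [suffixWord_getElem_low n b j tl hn hj.1 hj.2 q (by omega) (by omega)]
      rcases Nat.eq_zero_or_pos q with rfl | hq0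
      · rw [if_pos rfl]
        cases b
        · rw [if_neg (by simp)]; unfold dnAdj; omega
        · rw [if_pos rfl]; unfold dnAdj; omega
      · rw [if_neg (by omega)]
        unfold dnAdj; omega
    · have hT : q + 1 - (n - j) < (suffixWord n (!b) tl).length := by omega
      rw [suffixWord_getElem_high n b j tl hn hj.2 (q+1) (by omega) h hT] at hle ⊢
      by_cases hq1 : q + 1 = n - j
      · exfalso
        cases tl with
        | nil => simp [suffixWord] at hT
        | cons j₂ tl₂ =>
          have hj₂ := hbd j₂ (by simp)
          rw [suffixWord_getElem_low n (!b) j₂ tl₂ hn hj₂.1 hj₂.2 _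
              (by omega) hT, if_pos (by omega)] at hle
          cases b
          · rw [show (!false) = true from rfl, if_pos rfl] at hle; omega
          · rw [show (!true) = false from rfl, if_neg (by simp)] at hle; omega
      · rw [suffixWord_getElem_high n b j tl hn hj.2 q (by omega) (by omega) (by omega)]
        have e1 : q + 1 - (n - j) = (q - (n - j)) + 1 := by omega
        simp only [e1] at hle ⊢
        exact ih (!b) (fun a ha => hbd a (List.mem_cons_of_mem _ ha)) _ (by omega) hle

lemma suffix_other_head (n : ℕ) (hn : 4 ≤ n) (js : List ℕ) (b : Bool)
    (hbd : ∀ j ∈ js, 1 ≤ j ∧ j ≤ n - 1)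
    (q : ℕ) (hq : q < (suffixWord n b js).length)
    (h1 : n - 1 ≤ (suffixWord n b js)[q])
    (h2 : (suffixWord n b js)[q] ≠ (if b then n else n - 1)) :
    ∃ j tl, js = j :: tl ∧ n - j ≤ q ∧ tl ≠ [] := by
  cases js with
  | nil => simp [suffixWord] at hq
  | cons j tl =>
    have hj := hbd j List.mem_cons_self
    have hL := suffixWord_length_cons n b j tl hn hj.2
    have hge : n - j ≤ q := by
      by_contra hlt
      rw [suffixWord_getElem_low n b j tl hn hj.1 hj.2 q (by omega) hq] at h1 h2
      rcases Nat.eq_zero_or_pos q with rfl | hq0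
      · rw [if_pos rfl] at h2; exact h2 rfl
      · rw [if_neg (by omega)] at h1; omega
    refine ⟨j, tl, rfl, hge, ?_⟩
    rintro rfl
    rw [hL] at hq
    simp [suffixWord] at hq
    omega


set_option maxHeartbeats 1000000 in
lemma suffix_homog (n : ℕ) (hn : 4 ≤ n) (js : List ℕ) (b : Bool)
    (hch : js.Chain' (· < ·)) (hbd : ∀ j ∈ js, 1 ≤ j ∧ j ≤ n - 1) :
    ∀ r s (hr : r < (suffixWord n b js).length) (hs : s < (suffixWord n b js).length),
      r < s → (suffixWord n b js)[r] = (suffixWord n b js)[s] →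
      ∃ (t : ℕ) (u : ℕ) (ht : t < (suffixWord n b js).length)
        (hu : u < (suffixWord n b js).length),
        r < t ∧ t < u ∧ u < s ∧
        dnAdj n ((suffixWord n b js)[r]'hr) ((suffixWord n b js)[t]'ht) ∧
        dnAdj n ((suffixWord n b js)[r]'hr) ((suffixWord n b js)[u]'hu) := by
  induction js generalizing b with
  | nil => intro r s hr; simp [suffixWord] at hr
  | cons j tl ih =>
    intro r s hr hs hrs heq
    have hj := hbd j List.mem_cons_self
    have hL := suffixWord_length_cons n b j tl hn hj.2
    by_cases hsseg : s < n - j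
    · -- both inside the first segment: impossible (no duplicates)
      exfalso
      have hvs : (suffixWord n b (j :: tl))[s] = n - 1 - s := by
        rw [suffixWord_getElem_low n b j tl hn hj.1 hj.2 s (by omega) hs, if_neg (by omega)]
      rcases Nat.eq_zero_or_pos r with rfl | hr0
      · have hvr : (suffixWord n b (j :: tl))[0]'hr = (if b then n else n - 1) := by
          rw [suffixWord_getElem_low n b j tl hn hj.1 hj.2 0 (by omega) hr, if_pos rfl]
        rw [hvr, hvs] at heq
        cases b
        · rw [if_neg (by simp)] at heq; omega
        · rw [if_pos rfl] at heq; omega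
      · have hvr : (suffixWord n b (j :: tl))[r] = n - 1 - r := by
          rw [suffixWord_getElem_low n b j tl hn hj.1 hj.2 r (by omega) hr, if_neg (by omega)]
        rw [hvr, hvs] at heq
        omega
    · by_cases hrseg : n - j ≤ r
      · -- both inside the tail: induction
        have hrT : r - (n - j) < (suffixWord n (!b) tl).length := by omega
        have hsT : s - (n - j) < (suffixWord n (!b) tl).length := by omega
        have er := suffixWord_getElem_high n b j tl hn hj.2 r hrseg hr hrT
        have es := suffixWord_getElem_high n b j tl hn hj.2 s (by omega) hs hsT
        rw [er, es] at heq
        obtain ⟨t', u', ht', hu', h1, h2, h3, h4, h5⟩ :=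
          ih (!b) hch.tail (fun a ha => hbd a (List.mem_cons_of_mem _ ha))
            (r - (n - j)) (s - (n - j)) hrT hsT (by omega) heq
        have et : (suffixWord n b (j :: tl))[(n - j) + t']'(by omega) =
            (suffixWord n (!b) tl)[t'] :=
          suffixWord_getElem_high' n b j tl hn hj.2 t' ht' (by omega)
        have eu : (suffixWord n b (j :: tl))[(n - j) + u']'(by omega) =
            (suffixWord n (!b) tl)[u'] :=
          suffixWord_getElem_high' n b j tl hn hj.2 u' hu' (by omega)
        refine ⟨(n - j) + t', (n - j) + u', by omega, by omega, by omega, by omega, by omega,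
          ?_, ?_⟩
        · rw [et]
          rw [er]
          exact h4
        · rw [eu]
          rw [er]
          exact h5
      · -- crossing: r in first segment, s in the tail
        have hsT : s - (n - j) < (suffixWord n (!b) tl).length := by omega
        have hshigh := suffixWord_getElem_high n b j tl hn hj.2 s (by omega) hs hsT
        obtain ⟨j₂, tl₂, rfl⟩ : ∃ j₂ tl₂, tl = j₂ :: tl₂ := by
          cases tl with
          | nil => exfalso; simp [suffixWord] at hsT
          | cons a l => exact ⟨a, l, rfl⟩
        have hj₂ := hbd j₂ (by simp)
        have hjj₂ : j < j₂ := (List.isChain_cons_cons.1 hch).1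
        have hLT := suffixWord_length_cons n (!b) j₂ tl₂ hn hj₂.2
        rcases Nat.eq_zero_or_pos r with rfl | hr0
        · -- r = 0 : the letter is the segment head
          have hrlow : (suffixWord n b (j :: j₂ :: tl₂))[0]'hr = (if b then n else n - 1) := by
            rw [suffixWord_getElem_low n b j (j₂ :: tl₂) hn hj.1 hj.2 0 (by omega) hr,
              if_pos rfl]
          obtain ⟨j₂', tl₂', he, hge2, hne2⟩ :=
            suffix_other_head n hn (j₂ :: tl₂) (!b)
              (fun a ha => hbd a (List.mem_cons_of_mem _ ha)) (s - (n - j)) hsT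
              (by rw [← hshigh, ← heq, hrlow]
                  cases b <;> simp <;> omega)
              (by rw [← hshigh, ← heq, hrlow]
                  cases b <;> simp <;> omega)
          injection he with he1 he2
          subst he1; subst he2
          -- j₂ ≤ n - 2 since a third segment exists
          have hj₂n : j₂ ≤ n - 2 := by
            cases tl₂ with
            | nil => exact absurd rfl hne2
            | cons j₃ tl₃ =>
              have hj₃ := hbd j₃ (by simp)
              have h23 : j₂ < j₃ := (List.isChain_cons_cons.1 hch.tail).1
              omega
          have hvt : (suffixWord n b (j :: j₂ :: tl₂))[1]'(by omega) = n - 2 := by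
            rw [suffixWord_getElem_low n b j (j₂ :: tl₂) hn hj.1 hj.2 1 (by omega) (by omega),
              if_neg (by omega)]
            omega
          have hvu : (suffixWord n b (j :: j₂ :: tl₂))[(n - j) + 1]'(by omega) = n - 2 := by
            rw [suffixWord_getElem_high' n b j (j₂ :: tl₂) hn hj.2 1 (by omega) (by omega),
              suffixWord_getElem_low n (!b) j₂ tl₂ hn hj₂.1 hj₂.2 1 (by omega) (by omega),
              if_neg (by omega)]
            omega
          refine ⟨1, (n - j) + 1, by omega, by omega, by omega, by omega, by omega, ?_, ?_⟩
          · rw [hvt]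
            rw [hrlow]
            cases b
            · rw [if_neg (by simp)]; unfold dnAdj; omega
            · rw [if_pos rfl]; unfold dnAdj; omega
          · rw [hvu]
            rw [hrlow]
            cases b
            · rw [if_neg (by simp)]; unfold dnAdj; omega
            · rw [if_pos rfl]; unfold dnAdj; omega
        · -- r ≥ 1 : the letter is inside the descending part
          have hvr : (suffixWord n b (j :: j₂ :: tl₂))[r] = n - 1 - r := by
            rw [suffixWord_getElem_low n b j (j₂ :: tl₂) hn hj.1 hj.2 r (by omega) hr,
              if_neg (by omega)]
          have hvs : (suffixWord n b (j :: j₂ :: tl₂))[s]'hs = n - 1 - r := by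
            rw [← heq, hvr]
          have hvT : (suffixWord n (!b) (j₂ :: tl₂))[s - (n - j)]'hsT = n - 1 - r := by
            rw [← hshigh, hvs]
          -- the letter is at least j₂
          have hcge : j₂ ≤ n - 1 - r := by
            have hmem := List.getElem_mem hsT
            rw [hvT] at hmem
            refine suffix_le_mem n j₂ hj₂.2 (j₂ :: tl₂) (!b) ?_ _ hmem
            intro a ha
            rcases List.mem_cons.1 ha with rfl | ha
            · exact le_refl _
            · exact le_of_lt ((List.pairwise_cons.1 (List.isChain_iff_pairwise.1 hch.tail)).1 a ha)
          -- s is strictly beyond the start of the second segment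
          have hs1 : n - j + 1 ≤ s := by
            rcases Nat.lt_or_ge (n - j) s with h | h
            · omega
            · exfalso
              have h0 : s - (n - j) = 0 := by omega
              have hv0 : (suffixWord n (!b) (j₂ :: tl₂))[s - (n - j)]'hsT =
                  (if (!b) then n else n - 1) := by
                rw [suffixWord_getElem_low n (!b) j₂ tl₂ hn hj₂.1 hj₂.2 _ (by omega) hsT,
                  if_pos h0]
              rw [hvT] at hv0
              cases b
              · rw [show (!false) = true from rfl, if_pos rfl] at hv0; omega
              · rw [show (!true) = false from rfl, if_neg (by simp)] at hv0; omega
          have hvt : (suffixWord n b (j :: j₂ :: tl₂))[r + 1]'(by omega) = n - 1 - (r + 1) := by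
            rw [suffixWord_getElem_low n b j (j₂ :: tl₂) hn hj.1 hj.2 (r + 1) (by omega)
              (by omega), if_neg (by omega)]
          have hpa := suffix_pred_adj n hn (j :: j₂ :: tl₂) b hbd (s - 1) (by omega)
          simp only [show s - 1 + 1 = s from by omega] at hpa
          have hpa' := hpa ?_
          · refine ⟨r + 1, s - 1, by omega, by omega, by omega, by omega, by omega, ?_, ?_⟩
            · rw [hvt]
              rw [hvr]
              unfold dnAdj; omega
            · rw [hvr]
              rw [← hvs]
              exact hpa'
          · rw [hvs]; omega

lemma prefixWord_le (n : ℕ) (i : ℕ → ℕ) : ∀ x ∈ prefixWord n i, x ≤ n - 1 := by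
  intro x hx
  simp only [prefixWord, List.mem_flatMap, List.mem_range] at hx
  obtain ⟨t, ht, hx⟩ := hx
  have := (mem_desc hx).2
  omega

lemma suffix_common_len (n k : ℕ) (hn : 4 ≤ n) (hk : k ≤ n - 3) (js : List ℕ)
    (hbd : ∀ j ∈ js, 1 ≤ j ∧ j ≤ n - 1)
    (hhead : js.head? = some (k + 1)) (hlen : 2 ≤ js.length) :
    n - k ≤ (suffixWord n true js).length := by
  obtain ⟨j₂, tl₂, rfl⟩ : ∃ j₂ tl₂, js = (k + 1) :: j₂ :: tl₂ := by
    cases js with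
    | nil => simp at hhead
    | cons a l =>
      cases l with
      | nil => simp at hlen
      | cons a2 l2 =>
        simp only [List.head?_cons, Option.some.injEq] at hhead
        exact ⟨a2, l2, by rw [hhead]⟩
  have h1 : k + 1 ≤ n - 1 := by omega
  have hj₂ := hbd j₂ (by simp)
  have hL := suffixWord_length_cons n true (k + 1) (j₂ :: tl₂) hn h1
  have hLT := suffixWord_length_cons n (!true) j₂ tl₂ hn hj₂.2
  omega

lemma suffix_common_val (n k : ℕ) (hn : 4 ≤ n) (hk : k ≤ n - 3) (js : List ℕ)
    (hbd : ∀ j ∈ js, 1 ≤ j ∧ j ≤ n - 1)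
    (hhead : js.head? = some (k + 1)) (hlen : 2 ≤ js.length)
    (x : ℕ) (hx : x < n - k) (hx' : x < (suffixWord n true js).length) :
    (suffixWord n true js)[x] =
      if x = 0 then n else if x = n - k - 1 then n - 1 else n - 1 - x := by
  obtain ⟨j₂, tl₂, rfl⟩ : ∃ j₂ tl₂, js = (k + 1) :: j₂ :: tl₂ := by
    cases js with
    | nil => simp at hhead
    | cons a l =>
      cases l with
      | nil => simp at hlen
      | cons a2 l2 =>
        simp only [List.head?_cons, Option.some.injEq] at hhead
        exact ⟨a2, l2, by rw [hhead]⟩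
  have h1 : k + 1 ≤ n - 1 := by omega
  have hj₂ := hbd j₂ (by simp)
  have hL := suffixWord_length_cons n true (k + 1) (j₂ :: tl₂) hn h1
  have hLT := suffixWord_length_cons n (!true) j₂ tl₂ hn hj₂.2
  by_cases hlow : x < n - (k + 1)
  · rw [suffixWord_getElem_low n true (k + 1) (j₂ :: tl₂) hn (by omega) h1 x hlow hx']
    rcases Nat.eq_zero_or_pos x with rfl | hx0
    · simp
    · rw [if_neg (by omega), if_neg (by omega), if_neg (by omega)]
  · have hxe : x = n - k - 1 := by omega
    have he : x = n - (k + 1) + 0 := by omega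
    rw [show (suffixWord n true ((k+1) :: j₂ :: tl₂))[x] =
        (suffixWord n true ((k+1) :: j₂ :: tl₂))[n - (k+1) + 0]'(by omega) from by
      congr 1 <;> try omega]
    rw [suffixWord_getElem_high' n true (k + 1) (j₂ :: tl₂) hn h1 0 (by omega) (by omega)]
    rw [suffixWord_getElem_low n (!true) j₂ tl₂ hn hj₂.1 hj₂.2 0 (by omega) (by omega)]
    rw [if_pos rfl, if_neg (show ¬ (x = 0) from by omega), if_pos hxe]
    simp

set_option maxHeartbeats 1000000 in
lemma homog_transfer (n k : ℕ) (hn : 4 ≤ n) (hk : k ≤ n - 3)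
    (js js' : List ℕ) (hjs : ValidSuffixIdx n js) (hjs' : ValidSuffixIdx n js')
    (hhead : js.head? = some (k + 1)) (hhead' : js'.head? = some (k + 1))
    (hlen : 2 ≤ js.length) (hlen' : 2 ≤ js'.length)
    (p : List ℕ) (hp : ∀ x ∈ p, x ≤ n - 1)
    (H : Homog (dnAdj n) (p ++ suffixWord n true js)) :
    Homog (dnAdj n) (p ++ suffixWord n true js') := by
  obtain ⟨hch, hbd⟩ := hjs
  obtain ⟨hch', hbd'⟩ := hjs'
  have hL1 := suffix_common_len n k hn hk js hbd hhead hlen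
  have hL2 := suffix_common_len n k hn hk js' hbd' hhead' hlen'
  have agree : ∀ x (h1 : x < (p ++ suffixWord n true js).length)
      (h2 : x < (p ++ suffixWord n true js').length), x < p.length + (n - k) →
      (p ++ suffixWord n true js)[x] = (p ++ suffixWord n true js')[x] := by
    intro x h1 h2 hx
    rw [List.length_append] at h1 h2
    by_cases hxp : x < p.length
    · rw [List.getElem_append_left hxp, List.getElem_append_left hxp]
    · rw [List.getElem_append_right (show p.length ≤ x from by omega),
        List.getElem_append_right (show p.length ≤ x from by omega)]
      rw [suffix_common_val n k hn hk js hbd hhead hlen _ (by omega) (by omega),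
        suffix_common_val n k hn hk js' hbd' hhead' hlen' _ (by omega) (by omega)]
  intro r s hrs heq
  simp only [List.get_eq_getElem] at heq
  have hrw2 := r.isLt
  have hsw2 := s.isLt
  have hw2len : (p ++ suffixWord n true js').length = p.length + (suffixWord n true js').length :=
    List.length_append
  have hw1len : (p ++ suffixWord n true js).length = p.length + (suffixWord n true js).length :=
    List.length_append
  by_cases hcase : (s : ℕ) < p.length + (n - k)
  · -- the pair lies in the common region: transfer from the first word
    have hs1 : (s : ℕ) < (p ++ suffixWord n true js).length := by omega
    have hr1 : (r : ℕ) < (p ++ suffixWord n true js).length := by omega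
    obtain ⟨t, u, h1, h2, h3, h4, h5⟩ := H ⟨r, hr1⟩ ⟨s, hs1⟩ hrs (by
      simp only [List.get_eq_getElem]
      rw [agree (r : ℕ) hr1 r.isLt (by omega), agree (s : ℕ) hs1 s.isLt (by omega)]
      exact heq)
    simp only [List.get_eq_getElem] at h1 h2 h3 h4 h5
    have htw1 := t.isLt
    have huw1 := u.isLt
    refine ⟨⟨t, by omega⟩, ⟨u, by omega⟩, h1, h2, h3, ?_, ?_⟩
    · simp only [List.get_eq_getElem]
      rw [← agree (r : ℕ) hr1 r.isLt (by omega), ← agree (t : ℕ) t.isLt (by omega) (by omega)]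
      exact h4
    · simp only [List.get_eq_getElem]
      rw [← agree (r : ℕ) hr1 r.isLt (by omega), ← agree (u : ℕ) u.isLt (by omega) (by omega)]
      exact h5
  · -- s is deep in the second suffix
    have hsS : (s : ℕ) - p.length < (suffixWord n true js').length := by omega
    have es : (p ++ suffixWord n true js')[(s : ℕ)]'s.isLt =
        (suffixWord n true js')[(s : ℕ) - p.length] :=
      List.getElem_append_right (by omega)
    by_cases hrp : (r : ℕ) < p.length
    · -- r lies in the prefix: use an earlier occurrence of the letter in the suffix
      have er : (p ++ suffixWord n true js')[(r : ℕ)]'r.isLt = p[(r : ℕ)] :=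
        List.getElem_append_left hrp
      have hcle : (p ++ suffixWord n true js')[(r : ℕ)]'r.isLt ≤ n - 1 := by
        rw [er]; exact hp _ (List.getElem_mem hrp)
      have hallge : ∀ a ∈ js', k + 1 ≤ a := by
        obtain ⟨j₂', tl₂', he⟩ : ∃ a l, js' = (k + 1) :: a :: l := by
          cases js' with
          | nil => simp at hhead'
          | cons a l =>
            cases l with
            | nil => simp at hlen'
            | cons a2 l2 =>
              simp only [List.head?_cons, Option.some.injEq] at hhead'
              exact ⟨a2, l2, by rw [hhead']⟩
        subst he
        intro a ha
        rcases List.mem_cons.1 ha with rfl | ha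
        · exact le_refl _
        · exact le_of_lt ((List.pairwise_cons.1 (List.isChain_iff_pairwise.1 hch')).1 a ha)
      have hcge : k + 1 ≤ (p ++ suffixWord n true js')[(r : ℕ)]'r.isLt := by
        rw [heq, es]
        exact suffix_le_mem n (k + 1) (by omega) js' true hallge _ (List.getElem_mem hsS)
      obtain ⟨q, hqb, hq1, hq2⟩ : ∃ (q : ℕ) (hb : q < (suffixWord n true js').length),
          q < n - k ∧ (suffixWord n true js')[q]'hb =
            (p ++ suffixWord n true js')[(r : ℕ)]'r.isLt := by
        by_cases hcn : (p ++ suffixWord n true js')[(r : ℕ)]'r.isLt = n - 1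
        · refine ⟨n - k - 1, by omega, by omega, ?_⟩
          rw [suffix_common_val n k hn hk js' hbd' hhead' hlen' _ (by omega) (by omega),
            if_neg (by omega), if_pos rfl]
          omega
        · refine ⟨n - 1 - (p ++ suffixWord n true js')[(r : ℕ)]'r.isLt, by omega, by omega, ?_⟩
          rw [suffix_common_val n k hn hk js' hbd' hhead' hlen' _ (by omega) (by omega),
            if_neg (by omega), if_neg (by omega)]
          omega
      obtain ⟨t', u', ht', hu', h1, h2, h3, h4, h5⟩ :=
        suffix_homog n hn js' true hch' hbd' q ((s : ℕ) - p.length) hqb hsS (by omega)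
          (by rw [hq2, heq, es])
      refine ⟨⟨p.length + t', by omega⟩, ⟨p.length + u', by omega⟩, by simp; omega,
        by simp; omega, by simp; omega, ?_, ?_⟩
      · simp only [List.get_eq_getElem]
        have et : (p ++ suffixWord n true js')[p.length + t']'(by omega) =
            (suffixWord n true js')[t'] := by
          rw [List.getElem_append_right (by omega)]
          congr 1 <;> try omega
        rw [et]
        rw [← hq2]
        exact h4
      · simp only [List.get_eq_getElem]
        have eu : (p ++ suffixWord n true js')[p.length + u']'(by omega) =
            (suffixWord n true js')[u'] := by
          rw [List.getElem_append_right (by omega)]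
          congr 1 <;> try omega
        rw [eu]
        rw [← hq2]
        exact h5
    · -- both r and s lie in the suffix
      have hrS : (r : ℕ) - p.length < (suffixWord n true js').length := by omega
      have er : (p ++ suffixWord n true js')[(r : ℕ)]'r.isLt =
          (suffixWord n true js')[(r : ℕ) - p.length] :=
        List.getElem_append_right (by omega)
      obtain ⟨t', u', ht', hu', h1, h2, h3, h4, h5⟩ :=
        suffix_homog n hn js' true hch' hbd' ((r : ℕ) - p.length) ((s : ℕ) - p.length)
          hrS hsS (by omega) (by rw [← er, ← es]; exact heq)
      refine ⟨⟨p.length + t', by omega⟩, ⟨p.length + u', by omega⟩, by simp; omega,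
        by simp; omega, by simp; omega, ?_, ?_⟩
      · simp only [List.get_eq_getElem]
        have et : (p ++ suffixWord n true js')[p.length + t']'(by omega) =
            (suffixWord n true js')[t'] := by
          rw [List.getElem_append_right (by omega)]
          congr 1 <;> try omega
        rw [et]
        rw [er]
        exact h4
      · simp only [List.get_eq_getElem]
        have eu : (p ++ suffixWord n true js')[p.length + u']'(by omega) =
            (suffixWord n true js')[u'] := by
          rw [List.getElem_append_right (by omega)]
          congr 1 <;> try omega
        rw [eu]
        rw [er]
        exact h5

lemma collection_eq_image (n : ℕ) (suf : List ℕ) :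
    collection n suf = (fun p => p ++ suf) '' prefixSet n suf := by
  ext w
  constructor
  · rintro ⟨i, hi, rfl, hh⟩
    exact ⟨prefixWord n i, ⟨i, hi, rfl, hh⟩, rfl⟩
  · rintro ⟨p, ⟨i, hi, rfl, hh⟩, rfl⟩
    exact ⟨i, hi, rfl, hh⟩


/-- For `0 ≤ k ≤ n-3`, any two collections labeled by suffixes whose first segment descends
exactly to `k+1` and which have at least two segments have the same set of prefixes, and in
particular the same number of elements. -/
theorem same_prefixes (n k : ℕ) (hn : 4 ≤ n) (hk : k ≤ n - 3)
    (js js' : List ℕ) (hjs : ValidSuffixIdx n js) (hjs' : ValidSuffixIdx n js')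
    (hhead : js.head? = some (k + 1)) (hhead' : js'.head? = some (k + 1))
    (hlen : 2 ≤ js.length) (hlen' : 2 ≤ js'.length) :
    prefixSet n (suffixWord n true js) = prefixSet n (suffixWord n true js') ∧
    Nat.card ↥(collection n (suffixWord n true js)) =
      Nat.card ↥(collection n (suffixWord n true js')) := by
  have hps : prefixSet n (suffixWord n true js) = prefixSet n (suffixWord n true js') := by
    ext p
    constructor
    · rintro ⟨i, hi, rfl, hh⟩
      exact ⟨i, hi, rfl, homog_transfer n k hn hk js js' hjs hjs' hhead hhead' hlen hlen' _
        (prefixWord_le n i) hh⟩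
    · rintro ⟨i, hi, rfl, hh⟩
      exact ⟨i, hi, rfl, homog_transfer n k hn hk js' js hjs' hjs hhead' hhead hlen' hlen _
        (prefixWord_le n i) hh⟩
  refine ⟨hps, ?_⟩
  rw [collection_eq_image, collection_eq_image,
    Nat.card_image_of_injective (fun a b h => List.append_cancel_right h) _,
    Nat.card_image_of_injective (fun a b h => List.append_cancel_right h) _, hps]
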